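/- The solution of the mean-first-passage-time matrix equation is unique: if M and M' both satisfy X = E + X·P − D·P and both have diagonal entries X_{ii} = 1/π_i, and the only left eigenvectors of P with eigenvalue 1 are scalar multiples of the all-ones vector, then M = M'. -/
import Mathlib


/-- Uniqueness of the mean-first-passage-time matrix: if `M` and `M'` both satisfy
`X = E + X·P - D·P` and both have diagonal entries `X_{ii} = 1/pv i`, and the only left
eigenvectors of `P` with eigenvalue `1` are scalar multiples of the all-ones vector,
then `M = M'`. -/
theorem mfpt_unique {N : ℕ} (P : Matrix (Fin N) (Fin N) ℝ)
    (hpos : ∀ i j, 0 ≤ P i j) (hcol : ∀ j, ∑ i, P i j = 1)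
    (pv : Fin N → ℝ) (hstat : P.mulVec pv = pv) (hsum : ∑ j, pv j = 1)
    (hppos : ∀ i, 0 < pv i)
    (heig : ∀ w : Fin N → ℝ, Matrix.vecMul w P = w → ∃ c : ℝ, w = fun _ => c)
    (M M' : Matrix (Fin N) (Fin N) ℝ)
    (hM : M = (Matrix.of fun _ _ => (1 : ℝ)) + M * P
            - (Matrix.diagonal fun i => (pv i)⁻¹) * P)
    (hM' : M' = (Matrix.of fun _ _ => (1 : ℝ)) + M' * P
            - (Matrix.diagonal fun i => (pv i)⁻¹) * P)
    (hMd : ∀ i, M i i = (pv i)⁻¹) (hM'd : ∀ i, M' i i = (pv i)⁻¹) :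
    M = M' := by
  have hY : M - M' = (M - M') * P := by
    rw [sub_mul]
    nth_rewrite 1 [hM]
    nth_rewrite 1 [hM']
    abel
  have hrow : ∀ i, ∃ c : ℝ, (fun j => (M - M') i j) = fun _ => c := by
    intro i
    apply heig
    funext j
    have := congrFun (congrFun hY i) j
    simpa [Matrix.vecMul, Matrix.mul_apply, dotProduct] using this.symm
  have hzero : ∀ i j, (M - M') i j = 0 := by
    intro i j
    obtain ⟨c, hc⟩ := hrow i
    have hdiag : (M - M') i i = 0 := by
      simp [Matrix.sub_apply, hMd i, hM'd i]
    have hcc : c = 0 := by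
      have := congrFun hc i
      simp at this
      rw [← this]
      exact hdiag
    have := congrFun hc j
    simp only [Matrix.sub_apply] at this ⊢
    rw [this, hcc]
  have : M - M' = 0 := by
    ext i j
    simpa using hzero i j
  exact sub_eq_zero.mp this
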